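/- Let a₁, …, a_m ∈ ℂⁿ with M = maxⱼ‖aⱼ‖, A = (a₁, …, a_m) ∈ ℂ^{n×m}, and suppose λ_max(AAᴴ) ≤ 2m and (1/m)∑ⱼ| |aⱼᴴw|² − |aⱼᴴw′|² | ≤ (3/2)‖w − w′‖(‖w‖ + ‖w′‖) for all w, w′ ∈ ℂⁿ. Then for the function f_c(z) = (1/(2m))∑ⱼ(|aⱼᴴz|² − bⱼ²)², its Wirtinger Hessian satisfies ‖∇²_w f_c(w) − ∇²_w f_c(w′)‖ ≤ 20M²R‖w − w′‖ for all w, w′ with ‖w‖, ‖w′‖ ≤ R. -/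

import Mathlib

/-- `aᴴz` for vectors in `ℂⁿ`, i.e. the complex inner product `⟪a, z⟫`. -/
noncomputable def cip {n : ℕ} (a z : EuclideanSpace ℂ (Fin n)) : ℂ :=
  inner ℂ a z

/-- The Wirtinger-Hessian quadratic form of the phase-retrieval objective
`f_c(z) = (1/(2m)) ∑ⱼ (|aⱼᴴz|² − bⱼ²)²` at `z`, evaluated at the direction `(v, v̄)`:
`(v, v̄)ᴴ ∇²_w f_c(z) (v, v̄)`. -/
noncomputable def wirtingerQuadForm {m n : ℕ} (a : Fin m → EuclideanSpace ℂ (Fin n))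
    (b : Fin m → ℝ) (z v : EuclideanSpace ℂ (Fin n)) : ℝ :=
  (2 / (m : ℝ)) * ∑ j, ((2 * ‖cip (a j) z‖ ^ 2 - (b j) ^ 2) * ‖cip (a j) v‖ ^ 2
    + ((cip (a j) z) ^ 2 * (starRingEnd ℂ) ((cip (a j) v) ^ 2)).re)

lemma cip_norm_le {n : ℕ} (a z : EuclideanSpace ℂ (Fin n)) : ‖cip a z‖ ≤ ‖a‖ * ‖z‖ :=
  norm_inner_le_norm a z

lemma cip_sub {n : ℕ} (a w w' : EuclideanSpace ℂ (Fin n)) :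
    cip a w - cip a w' = cip a (w - w') := by
  simp [cip, inner_sub_right]

theorem stmt19 {m n : ℕ} (hm : 0 < m)
    (a : Fin m → EuclideanSpace ℂ (Fin n)) (b : Fin m → ℝ)
    (M R : ℝ) (hM : ∀ j, ‖a j‖ ≤ M) (hR : 0 < R)
    (hmax : ∀ v : EuclideanSpace ℂ (Fin n),
      (1 / (m : ℝ)) * ∑ j, ‖cip (a j) v‖ ^ 2 ≤ 2 * ‖v‖ ^ 2)
    (hconc : ∀ w w' : EuclideanSpace ℂ (Fin n),
      (1 / (m : ℝ)) * ∑ j, |‖cip (a j) w‖ ^ 2 - ‖cip (a j) w'‖ ^ 2|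
        ≤ 3 / 2 * ‖w - w'‖ * (‖w‖ + ‖w'‖)) :
    ∀ w w' v : EuclideanSpace ℂ (Fin n), ‖w‖ ≤ R → ‖w'‖ ≤ R → ‖v‖ = 1 →
      |wirtingerQuadForm a b w v - wirtingerQuadForm a b w' v|
        ≤ 20 * M ^ 2 * R * ‖w - w'‖ := by
  intro w w' v hw hw' hv
  have hm' : (0:ℝ) < m := by exact_mod_cast hm
  have hM0 : 0 ≤ M := le_trans (norm_nonneg _) (hM ⟨0, hm⟩)
  have hd0 : (0:ℝ) ≤ ‖w - w'‖ := norm_nonneg _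
  -- rewrite the difference
  have hdiff : wirtingerQuadForm a b w v - wirtingerQuadForm a b w' v
      = (2 / (m : ℝ)) * ∑ j,
        (2 * (‖cip (a j) w‖ ^ 2 - ‖cip (a j) w'‖ ^ 2) * ‖cip (a j) v‖ ^ 2
          + ((((cip (a j) w) ^ 2 - (cip (a j) w') ^ 2)
              * (starRingEnd ℂ) ((cip (a j) v) ^ 2)).re)) := by
    unfold wirtingerQuadForm
    rw [← mul_sub, ← Finset.sum_sub_distrib]
    congr 1
    refine Finset.sum_congr rfl fun j _ => ?_
    simp only [sub_mul, Complex.sub_re]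
    ring
  rw [hdiff]
  -- pointwise bound
  have key : ∀ j, |2 * (‖cip (a j) w‖ ^ 2 - ‖cip (a j) w'‖ ^ 2) * ‖cip (a j) v‖ ^ 2
      + ((((cip (a j) w) ^ 2 - (cip (a j) w') ^ 2)
          * (starRingEnd ℂ) ((cip (a j) v) ^ 2)).re)|
      ≤ 2 * M ^ 2 * |‖cip (a j) w‖ ^ 2 - ‖cip (a j) w'‖ ^ 2|
        + 2 * M ^ 2 * R * ‖w - w'‖ * ‖cip (a j) v‖ ^ 2 := by
    intro j
    have hv' : ‖cip (a j) v‖ ≤ M := by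
      have := cip_norm_le (a j) v
      rw [hv, mul_one] at this
      exact this.trans (hM j)
    have hv2 : ‖cip (a j) v‖ ^ 2 ≤ M ^ 2 :=
      pow_le_pow_left₀ (norm_nonneg _) hv' 2
    refine (abs_add_le _ _).trans ?_
    gcongr ?_ + ?_
    · rw [abs_mul, abs_mul]
      rw [abs_of_nonneg (by positivity : (0:ℝ) ≤ ‖cip (a j) v‖ ^ 2)]
      calc |(2:ℝ)| * |‖cip (a j) w‖ ^ 2 - ‖cip (a j) w'‖ ^ 2| * ‖cip (a j) v‖ ^ 2
          ≤ |(2:ℝ)| * |‖cip (a j) w‖ ^ 2 - ‖cip (a j) w'‖ ^ 2| * M ^ 2 := by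
            gcongr
        _ = 2 * M ^ 2 * |‖cip (a j) w‖ ^ 2 - ‖cip (a j) w'‖ ^ 2| := by
            rw [abs_two]; ring
    · refine (Complex.abs_re_le_norm _).trans ?_
      rw [norm_mul]
      have h1 : ‖(cip (a j) w) ^ 2 - (cip (a j) w') ^ 2‖
          ≤ 2 * M ^ 2 * R * ‖w - w'‖ := by
        have hfac : (cip (a j) w) ^ 2 - (cip (a j) w') ^ 2
            = (cip (a j) w - cip (a j) w') * (cip (a j) w + cip (a j) w') := by ring
        rw [hfac, norm_mul]
        have h2 : ‖cip (a j) w - cip (a j) w'‖ ≤ M * ‖w - w'‖ := by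
          rw [cip_sub]
          exact (cip_norm_le _ _).trans (by gcongr; exact hM j)
        have h3 : ‖cip (a j) w + cip (a j) w'‖ ≤ M * R + M * R := by
          refine (norm_add_le _ _).trans ?_
          gcongr
          · exact (cip_norm_le _ _).trans (by gcongr; exact hM j)
          · exact (cip_norm_le _ _).trans (by gcongr; exact hM j)
        calc ‖cip (a j) w - cip (a j) w'‖
              * ‖cip (a j) w + cip (a j) w'‖
            ≤ (M * ‖w - w'‖) * (M * R + M * R) := by
              exact mul_le_mul h2 h3 (by positivity) (by positivity)
          _ = 2 * M ^ 2 * R * ‖w - w'‖ := by ring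
      have h4 : ‖(starRingEnd ℂ) ((cip (a j) v) ^ 2)‖
          = ‖cip (a j) v‖ ^ 2 := by
        simp [norm_pow]
      rw [h4]
      exact mul_le_mul_of_nonneg_right h1 (by positivity)
  -- sum up
  have habs : |(2 / (m : ℝ)) * ∑ j,
      (2 * (‖cip (a j) w‖ ^ 2 - ‖cip (a j) w'‖ ^ 2) * ‖cip (a j) v‖ ^ 2
        + ((((cip (a j) w) ^ 2 - (cip (a j) w') ^ 2)
            * (starRingEnd ℂ) ((cip (a j) v) ^ 2)).re))|
      ≤ (2 / (m : ℝ)) * ∑ j,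
        (2 * M ^ 2 * |‖cip (a j) w‖ ^ 2 - ‖cip (a j) w'‖ ^ 2|
          + 2 * M ^ 2 * R * ‖w - w'‖ * ‖cip (a j) v‖ ^ 2) := by
    rw [abs_mul, abs_of_nonneg (by positivity : (0:ℝ) ≤ 2 / (m:ℝ))]
    gcongr
    exact (Finset.abs_sum_le_sum_abs _ _).trans (Finset.sum_le_sum fun j _ => key j)
  refine habs.trans ?_
  have hsplit : (2 / (m : ℝ)) * ∑ j,
      (2 * M ^ 2 * |‖cip (a j) w‖ ^ 2 - ‖cip (a j) w'‖ ^ 2|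
        + 2 * M ^ 2 * R * ‖w - w'‖ * ‖cip (a j) v‖ ^ 2)
      = 4 * M ^ 2 * ((1 / (m : ℝ)) * ∑ j, |‖cip (a j) w‖ ^ 2 - ‖cip (a j) w'‖ ^ 2|)
        + 4 * M ^ 2 * R * ‖w - w'‖ * ((1 / (m : ℝ)) * ∑ j, ‖cip (a j) v‖ ^ 2) := by
    rw [Finset.sum_add_distrib, ← Finset.mul_sum, ← Finset.mul_sum]
    field_simp
    ring
  rw [hsplit]
  have hb1 : 4 * M ^ 2 * ((1 / (m : ℝ)) * ∑ j, |‖cip (a j) w‖ ^ 2 - ‖cip (a j) w'‖ ^ 2|)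
      ≤ 12 * M ^ 2 * R * ‖w - w'‖ := by
    calc 4 * M ^ 2 * ((1 / (m : ℝ)) * ∑ j, |‖cip (a j) w‖ ^ 2 - ‖cip (a j) w'‖ ^ 2|)
        ≤ 4 * M ^ 2 * (3 / 2 * ‖w - w'‖ * (‖w‖ + ‖w'‖)) :=
          mul_le_mul_of_nonneg_left (hconc w w') (by positivity)
      _ ≤ 4 * M ^ 2 * (3 / 2 * ‖w - w'‖ * (R + R)) := by gcongr
      _ = 12 * M ^ 2 * R * ‖w - w'‖ := by ring
  have hb2 : 4 * M ^ 2 * R * ‖w - w'‖ * ((1 / (m : ℝ)) * ∑ j, ‖cip (a j) v‖ ^ 2)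
      ≤ 8 * M ^ 2 * R * ‖w - w'‖ := by
    calc 4 * M ^ 2 * R * ‖w - w'‖ * ((1 / (m : ℝ)) * ∑ j, ‖cip (a j) v‖ ^ 2)
        ≤ 4 * M ^ 2 * R * ‖w - w'‖ * (2 * ‖v‖ ^ 2) :=
          mul_le_mul_of_nonneg_left (hmax v) (by positivity)
      _ = 8 * M ^ 2 * R * ‖w - w'‖ := by rw [hv]; ring
  linarith
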